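/- arXiv:1706.07862 — 3 statements merged into one kernel-verified Lean document; each statement's English description precedes it below -/
import Mathlib

section
/- For any integers k ≥ 0 and N ≥ 1, the function f : ℝ^N → ℝ defined by f(x) = x₁^(3+k)/(x₁² + ... + x_N²) for x ≠ 0 and f(0) = 0 is of class C^k on ℝ^N. -/
open Filter Asymptotics Finset Topology

noncomputable section AuxM

variable {N : ℕ}

private def Sq (x : Fin N → ℝ) : ℝ := ∑ i, x i ^ 2

private def mon (α : Fin N → ℕ) (x : Fin N → ℝ) : ℝ := ∏ i, x i ^ α i

private def M (c : ℝ) (α : Fin N → ℕ) (p : ℕ) (x : Fin N → ℝ) : ℝ :=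
  if x = 0 then 0 else c * mon α x / Sq x ^ p

private def ee (j : Fin N) : Fin N → ℕ := Pi.single j 1

private lemma Sq_nonneg (x : Fin N → ℝ) : 0 ≤ Sq x :=
  Finset.sum_nonneg fun i _ => sq_nonneg _

private lemma Sq_pos {x : Fin N → ℝ} (hx : x ≠ 0) : 0 < Sq x := by
  rcases (Sq_nonneg x).lt_or_eq with h | h
  · exact h
  · exfalso; apply hx
    funext i
    have := (Finset.sum_eq_zero_iff_of_nonneg (fun i _ => sq_nonneg (x i))).1 h.symm i (mem_univ i)
    simpa using pow_eq_zero_iff (n := 2) (by norm_num) |>.1 this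

private lemma normsq_le_Sq (x : Fin N → ℝ) : ‖x‖ ^ 2 ≤ Sq x := by
  have h1 : ‖x‖ ≤ Real.sqrt (Sq x) := by
    rw [pi_norm_le_iff_of_nonneg (Real.sqrt_nonneg _)]
    intro i
    rw [show ‖x i‖ = Real.sqrt (x i ^ 2) by rw [Real.sqrt_sq_eq_abs]; rfl]
    exact Real.sqrt_le_sqrt (Finset.single_le_sum (fun i _ => sq_nonneg (x i)) (mem_univ i))
  calc ‖x‖ ^ 2 ≤ Real.sqrt (Sq x) ^ 2 := by
        exact pow_le_pow_left₀ (norm_nonneg x) h1 2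
    _ = Sq x := Real.sq_sqrt (Sq_nonneg x)

private lemma mon_abs_le (α : Fin N → ℕ) (x : Fin N → ℝ) :
    |mon α x| ≤ ‖x‖ ^ (∑ i, α i) := by
  rw [mon, abs_prod, ← Finset.prod_pow_eq_pow_sum]
  refine Finset.prod_le_prod (fun i _ => abs_nonneg _) fun i _ => ?_
  rw [abs_pow]
  exact pow_le_pow_left₀ (abs_nonneg _) (norm_le_pi_norm x i) _

private lemma M_zero (c : ℝ) (α : Fin N → ℕ) (p : ℕ) : M c α p 0 = 0 := if_pos rfl

private lemma M_bound {x : Fin N → ℝ} (hx : x ≠ 0) (c : ℝ) (α : Fin N → ℕ) (p : ℕ)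
    (h2p : 2 * p ≤ ∑ i, α i) :
    |M c α p x| ≤ |c| * ‖x‖ ^ (∑ i, α i - 2 * p) := by
  have hxn : (0:ℝ) < ‖x‖ := norm_pos_iff.2 hx
  have hSq : (0:ℝ) < Sq x := Sq_pos hx
  have hd : ‖x‖ ^ (2 * p) ≤ Sq x ^ p := by
    rw [pow_mul]
    exact pow_le_pow_left₀ (by positivity) (normsq_le_Sq x) p
  rw [M, if_neg hx, abs_div, abs_mul, abs_pow, abs_of_pos hSq, mul_div_assoc]
  refine mul_le_mul_of_nonneg_left ?_ (abs_nonneg c)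
  have key : |mon α x| / Sq x ^ p ≤ ‖x‖ ^ (∑ i, α i) / ‖x‖ ^ (2 * p) :=
    div_le_div₀ (by positivity) (mon_abs_le α x) (by positivity) hd
  refine key.trans (le_of_eq ?_)
  rw [eq_comm, eq_div_iff (by positivity), ← pow_add]
  congr 1
  omega

private lemma mon_single (j : Fin N) (m : ℕ) (x : Fin N → ℝ) :
    mon (Pi.single j m) x = x j ^ m := by
  rw [mon]
  rw [Finset.prod_eq_single j (fun i _ hij => by simp [Pi.single_eq_of_ne hij]) (by simp)]
  simp

private lemma mon_add_single (α : Fin N → ℕ) (j : Fin N) (x : Fin N → ℝ) :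
    mon (α + ee j) x = x j * mon α x := by
  rw [mon, mon]
  have : ∀ i, x i ^ (α + ee j) i = x i ^ α i * x i ^ (Pi.single j 1 : Fin N → ℕ) i := by
    intro i; rw [← pow_add]; rfl
  rw [Finset.prod_congr rfl fun i _ => this i, Finset.prod_mul_distrib]
  have : ∏ i, x i ^ (Pi.single j 1 : Fin N → ℕ) i = x j := by
    simpa [mon] using mon_single j 1 x
  rw [this]; ring

private lemma mon_sub_single {α : Fin N → ℕ} {j : Fin N} (hj : 0 < α j) (x : Fin N → ℝ) :
    mon (α - ee j) x = (∏ i ∈ univ.erase j, x i ^ α i) * x j ^ (α j - 1) := by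
  rw [mon, ← Finset.mul_prod_erase univ _ (mem_univ j)]
  have h1 : (α - ee j) j = α j - 1 := by simp [ee]
  have h2 : ∀ i ∈ univ.erase j, x i ^ (α - ee j) i = x i ^ α i := by
    intro i hi
    have hij : i ≠ j := (Finset.mem_erase.1 hi).1
    simp [ee, Pi.single_eq_of_ne hij]
  rw [h1, Finset.prod_congr rfl h2]
  ring

private lemma sum_sub_single (α : Fin N → ℕ) (j : Fin N) :
    ∑ i, α i ≤ (∑ i, (α - ee j) i) + 1 := by
  have h1 : ∀ i, α i ≤ (α - ee j) i + (ee j) i := fun i => le_tsub_add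
  have h2 : ∑ i, (ee j) i = 1 := by
    simp [ee, Finset.sum_pi_single']
  calc ∑ i, α i ≤ ∑ i, ((α - ee j) i + ee j i) := Finset.sum_le_sum fun i _ => h1 i
    _ = (∑ i, (α - ee j) i) + ∑ i, ee j i := Finset.sum_add_distrib
    _ = (∑ i, (α - ee j) i) + 1 := by rw [h2]

private lemma sum_add_single (α : Fin N → ℕ) (j : Fin N) :
    ∑ i, (α + ee j) i = (∑ i, α i) + 1 := by
  have h2 : ∑ i, (ee j) i = 1 := by simp [ee, Finset.sum_pi_single']
  calc ∑ i, (α + ee j) i = (∑ i, α i) + ∑ i, ee j i := by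
        rw [← Finset.sum_add_distrib]; rfl
    _ = (∑ i, α i) + 1 := by rw [h2]

private lemma continuous_Sq : Continuous (Sq (N := N)) := by
  unfold Sq
  exact continuous_finset_sum _ fun i _ => (continuous_apply i).pow 2

private lemma continuous_mon (α : Fin N → ℕ) : Continuous (mon α) := by
  unfold mon
  exact continuous_finset_prod _ fun i _ => (continuous_apply i).pow _

private lemma M_cont (c : ℝ) (α : Fin N → ℕ) (p : ℕ) (hdeg : 2 * p + 1 ≤ ∑ i, α i) :
    Continuous (M c α p) := by
  rw [continuous_iff_continuousAt]
  intro x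
  by_cases hx : x = 0
  · subst hx
    rw [ContinuousAt, M_zero]
    apply squeeze_zero_norm' (a := fun y => |c| * ‖y‖)
    · have h1 : ∀ᶠ y in 𝓝 (0 : Fin N → ℝ), ‖y‖ ≤ 1 := by
        have := Metric.ball_mem_nhds (0 : Fin N → ℝ) one_pos
        filter_upwards [this] with y hy
        simpa using (mem_ball_zero_iff.1 hy).le
      filter_upwards [h1] with y hy
      by_cases hy0 : y = 0
      · simp [hy0, M_zero]
      · have hb := M_bound hy0 c α p (by omega)
        rw [Real.norm_eq_abs]
        refine hb.trans ?_
        refine mul_le_mul_of_nonneg_left ?_ (abs_nonneg c)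
        calc ‖y‖ ^ (∑ i, α i - 2 * p) ≤ ‖y‖ ^ 1 :=
              pow_le_pow_of_le_one (norm_nonneg y) hy (by omega)
          _ = ‖y‖ := pow_one _
    · have : Continuous fun y : Fin N → ℝ => |c| * ‖y‖ := continuous_const.mul continuous_norm
      simpa using this.tendsto 0
  · have hev : M c α p =ᶠ[𝓝 x] fun y => c * mon α y / Sq y ^ p := by
      have : ∀ᶠ y in 𝓝 x, y ≠ 0 := eventually_ne_nhds hx
      filter_upwards [this] with y hy
      rw [M, if_neg hy]
    have hc : ContinuousAt (fun y => c * mon α y / Sq y ^ p) x := by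
      refine ContinuousAt.div ?_ ?_ ?_
      · exact (continuous_const.mul (continuous_mon α)).continuousAt
      · exact (continuous_Sq.pow p).continuousAt
      · exact pow_ne_zero _ (Sq_pos hx).ne'
    exact hc.congr (hev.symm)

private noncomputable def Lmap (c : ℝ) (α : Fin N → ℕ) (p : ℕ) (x : Fin N → ℝ) :
    (Fin N → ℝ) →L[ℝ] ℝ :=
  ∑ j, (M ((α j : ℝ) * c) (α - ee j) p x + M (-(2 * (p : ℝ) * c)) (α + ee j) (p + 1) x) •
    (ContinuousLinearMap.proj j : (Fin N → ℝ) →L[ℝ] ℝ)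

private lemma M_hasFDerivAt {x : Fin N → ℝ} (hx : x ≠ 0) (c : ℝ) (α : Fin N → ℕ) (p : ℕ) :
    HasFDerivAt (M c α p) (Lmap c α p x) x := by
  have hs : Sq x ≠ 0 := (Sq_pos hx).ne'
  have hpow : ∀ i : Fin N, HasFDerivAt (fun y : Fin N → ℝ => y i ^ α i)
      (((α i : ℝ) * x i ^ (α i - 1)) • (ContinuousLinearMap.proj i : (Fin N → ℝ) →L[ℝ] ℝ)) x :=
    fun i => (hasDerivAt_pow (α i) (x i)).comp_hasFDerivAt x (hasFDerivAt_apply (𝕜 := ℝ) i x)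
  have hP : HasFDerivAt (mon α)
      (∑ j, (∏ i ∈ univ.erase j, x i ^ α i) •
        (((α j : ℝ) * x j ^ (α j - 1)) • (ContinuousLinearMap.proj j : (Fin N → ℝ) →L[ℝ] ℝ))) x :=
    HasFDerivAt.finset_prod fun j _ => hpow j
  have hsq : ∀ i : Fin N, HasFDerivAt (fun y : Fin N → ℝ => y i ^ 2)
      ((2 * x i) • (ContinuousLinearMap.proj i : (Fin N → ℝ) →L[ℝ] ℝ)) x := by
    intro i
    have := (hasDerivAt_pow 2 (x i)).comp_hasFDerivAt x (hasFDerivAt_apply (𝕜 := ℝ) i x)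
    simpa [Function.comp_def] using this
  have hS : HasFDerivAt (Sq (N := N))
      (∑ i, (2 * x i) • (ContinuousLinearMap.proj i : (Fin N → ℝ) →L[ℝ] ℝ)) x :=
    HasFDerivAt.fun_sum fun i _ => hsq i
  have hQd : HasDerivAt (fun t : ℝ => (t ^ p)⁻¹)
      (-((p : ℝ) * Sq x ^ (p - 1)) / (Sq x ^ p) ^ 2) (Sq x) :=
    (hasDerivAt_pow p (Sq x)).inv (pow_ne_zero _ hs)
  have hQ : HasFDerivAt (fun y : Fin N → ℝ => (Sq y ^ p)⁻¹)
      ((-((p : ℝ) * Sq x ^ (p - 1)) / (Sq x ^ p) ^ 2) •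
        ∑ i, (2 * x i) • (ContinuousLinearMap.proj i : (Fin N → ℝ) →L[ℝ] ℝ)) x :=
    hQd.comp_hasFDerivAt x hS
  have hmul : HasFDerivAt (fun y : Fin N → ℝ => (c * mon α y) * (Sq y ^ p)⁻¹)
      ((c * mon α x) • ((-((p : ℝ) * Sq x ^ (p - 1)) / (Sq x ^ p) ^ 2) •
          ∑ i, (2 * x i) • (ContinuousLinearMap.proj i : (Fin N → ℝ) →L[ℝ] ℝ)) +
        (Sq x ^ p)⁻¹ • (c • (∑ j, (∏ i ∈ univ.erase j, x i ^ α i) •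
          (((α j : ℝ) * x j ^ (α j - 1)) •
            (ContinuousLinearMap.proj j : (Fin N → ℝ) →L[ℝ] ℝ))))) x := by
    have h1 : HasFDerivAt (fun y : Fin N → ℝ => c * mon α y)
        (c • (∑ j, (∏ i ∈ univ.erase j, x i ^ α i) •
          (((α j : ℝ) * x j ^ (α j - 1)) •
            (ContinuousLinearMap.proj j : (Fin N → ℝ) →L[ℝ] ℝ)))) x := hP.const_mul c
    exact h1.mul hQ
  have heq : Lmap c α p x = ((c * mon α x) • ((-((p : ℝ) * Sq x ^ (p - 1)) / (Sq x ^ p) ^ 2) •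
          ∑ i, (2 * x i) • (ContinuousLinearMap.proj i : (Fin N → ℝ) →L[ℝ] ℝ)) +
        (Sq x ^ p)⁻¹ • (c • (∑ j, (∏ i ∈ univ.erase j, x i ^ α i) •
          (((α j : ℝ) * x j ^ (α j - 1)) •
            (ContinuousLinearMap.proj j : (Fin N → ℝ) →L[ℝ] ℝ))))) := by
    ext y
    simp only [Lmap, ContinuousLinearMap.coe_sum', Finset.sum_apply,
      ContinuousLinearMap.coe_smul', Pi.smul_apply, ContinuousLinearMap.proj_apply,
      ContinuousLinearMap.add_apply, smul_eq_mul, Finset.mul_sum]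
    rw [← Finset.sum_add_distrib]
    refine Finset.sum_congr rfl fun j _ => ?_
    rw [M, if_neg hx, M, if_neg hx, mon_add_single]
    rcases Nat.eq_zero_or_pos (α j) with h0 | hpos
    · rw [h0]
      cases p with
      | zero => simp
      | succ q =>
        have hq : q + 1 - 1 = q := rfl
        rw [hq]
        push_cast
        field_simp
        ring
    · rw [mon_sub_single hpos]
      cases p with
      | zero =>
        simp only [pow_zero, Nat.cast_zero, Nat.cast_ofNat, CharP.cast_eq_zero]
        push_cast
        field_simp
        ring
      | succ q =>
        have hq : q + 1 - 1 = q := rfl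
        rw [hq]
        push_cast
        field_simp
        ring
  rw [heq]
  refine hmul.congr_of_eventuallyEq ?_
  have hev : M c α p =ᶠ[𝓝 x] fun y : Fin N → ℝ => (c * mon α y) * (Sq y ^ p)⁻¹ := by
    have : ∀ᶠ y in 𝓝 x, y ≠ 0 := eventually_ne_nhds hx
    filter_upwards [this] with y hy
    rw [M, if_neg hy, div_eq_mul_inv]
  exact hev

private lemma M_hasFDerivAt_zero (c : ℝ) (α : Fin N → ℕ) (p : ℕ)
    (hdeg : 2 * p + 2 ≤ ∑ i, α i) :
    HasFDerivAt (M c α p) (0 : (Fin N → ℝ) →L[ℝ] ℝ) 0 := by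
  rw [hasFDerivAt_iff_isLittleO_nhds_zero]
  simp only [zero_add, M_zero, sub_zero, ContinuousLinearMap.zero_apply]
  rw [isLittleO_iff]
  intro ε hε
  have hδ : 0 < min 1 (ε / (|c| + 1)) := by positivity
  rw [Metric.eventually_nhds_iff]
  refine ⟨min 1 (ε / (|c| + 1)), hδ, fun {y} hy => ?_⟩
  rw [dist_zero_right] at hy
  by_cases hy0 : y = 0
  · simp [hy0, M_zero]
  · have hy1 : ‖y‖ ≤ 1 := le_of_lt (lt_of_lt_of_le hy (min_le_left _ _))
    have hy2 : ‖y‖ ≤ ε / (|c| + 1) := le_of_lt (lt_of_lt_of_le hy (min_le_right _ _))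
    have hb := M_bound hy0 c α p (by omega)
    have h2 : ‖y‖ ^ (∑ i, α i - 2 * p) ≤ ‖y‖ ^ 2 :=
      pow_le_pow_of_le_one (norm_nonneg y) hy1 (by omega)
    rw [Real.norm_eq_abs]
    calc |M c α p y| ≤ |c| * ‖y‖ ^ (∑ i, α i - 2 * p) := hb
      _ ≤ |c| * ‖y‖ ^ 2 := mul_le_mul_of_nonneg_left h2 (abs_nonneg c)
      _ ≤ ε * ‖y‖ := by
          rw [sq]
          have h3 : |c| * (‖y‖ * ‖y‖) ≤ |c| * ((ε / (|c| + 1)) * ‖y‖) := by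
            refine mul_le_mul_of_nonneg_left ?_ (abs_nonneg c)
            exact mul_le_mul_of_nonneg_right hy2 (norm_nonneg y)
          refine h3.trans ?_
          rw [show |c| * (ε / (|c| + 1) * ‖y‖) = (|c| / (|c| + 1)) * (ε * ‖y‖) by ring]
          have h4 : |c| / (|c| + 1) ≤ 1 := by
            rw [div_le_one (by positivity)]; linarith [abs_nonneg c]
          nlinarith [norm_nonneg y, hε.le, mul_nonneg hε.le (norm_nonneg y)]

private lemma M_contDiff : ∀ (k : ℕ) (c : ℝ) (α : Fin N → ℕ) (p : ℕ),
    2 * p + k + 1 ≤ ∑ i, α i → ContDiff ℝ k (M c α p) := by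
  intro k
  induction k with
  | zero =>
    intro c α p h
    exact contDiff_zero.2 (M_cont c α p (by omega))
  | succ k ih =>
    intro c α p hdeg
    have hdiff : Differentiable ℝ (M c α p) := by
      intro x
      by_cases hx : x = 0
      · subst hx
        exact (M_hasFDerivAt_zero c α p (by omega)).differentiableAt
      · exact (M_hasFDerivAt hx c α p).differentiableAt
    have hfd : ∀ y : Fin N → ℝ, (fun x => fderiv ℝ (M c α p) x y) =
        fun x => ∑ j, y j • (M ((α j : ℝ) * c) (α - ee j) p x +
          M (-(2 * (p : ℝ) * c)) (α + ee j) (p + 1) x) := by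
      intro y
      funext x
      by_cases hx : x = 0
      · subst hx
        rw [(M_hasFDerivAt_zero c α p (by omega)).fderiv]
        simp [M_zero]
      · rw [(M_hasFDerivAt hx c α p).fderiv]
        simp only [Lmap, ContinuousLinearMap.coe_sum', Finset.sum_apply,
          ContinuousLinearMap.coe_smul', Pi.smul_apply, ContinuousLinearMap.proj_apply,
          smul_eq_mul]
        exact Finset.sum_congr rfl fun j _ => mul_comm _ _
    have hcast : ((k + 1 : ℕ) : WithTop ℕ∞) = (k : WithTop ℕ∞) + 1 := by norm_cast
    rw [hcast, contDiff_succ_iff_fderiv]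
    refine ⟨hdiff, by simp, ?_⟩
    rw [contDiff_clm_apply_iff]
    intro y
    rw [hfd y]
    refine ContDiff.sum fun j _ => ContDiff.const_smul _ (ContDiff.add ?_ ?_)
    · refine ih _ _ _ ?_
      have := sum_sub_single α j
      omega
    · refine ih _ _ _ ?_
      rw [sum_add_single α j]
      omega

end AuxM

theorem stmt_0 (k N : ℕ) (hN : 1 ≤ N) :
    ContDiff ℝ k (fun x : Fin N → ℝ =>
      if x = 0 then 0 else (x ⟨0, hN⟩) ^ (3 + k) / (∑ i, (x i) ^ 2)) := by
  have hdeg : 2 * 1 + k + 1 ≤ ∑ i, (Pi.single (⟨0, hN⟩ : Fin N) (3 + k) : Fin N → ℕ) i := by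
    rw [Finset.sum_pi_single']
    simp only [Finset.mem_univ, if_true]
    omega
  have h := M_contDiff k 1 (Pi.single (⟨0, hN⟩ : Fin N) (3 + k)) 1 hdeg
  have heq : M 1 (Pi.single (⟨0, hN⟩ : Fin N) (3 + k)) 1 = fun x : Fin N → ℝ =>
      if x = 0 then 0 else (x ⟨0, hN⟩) ^ (3 + k) / (∑ i, (x i) ^ 2) := by
    funext x
    by_cases hx : x = 0
    · simp [M, hx]
    · rw [M, if_neg hx, if_neg hx, mon_single, Sq]
      simp
  rwa [heq] at h
end

section
/- For any integers k ≥ 0 and N ≥ 1, the function f : ℝ^N → ℝ defined by f(x) = x₁^(3+k)/(x₁² + ... + x_N²) for x ≠ 0 and f(0) = 0 is k-flat at the origin, i.e., all partial derivatives of f of order ≤ k vanish at 0. -/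
section Homog
variable {E F : Type*} [NormedAddCommGroup E] [NormedSpace ℝ E]
  [NormedAddCommGroup F] [NormedSpace ℝ F]

noncomputable def smulCLE (c : ℝ) (hc : c ≠ 0) : E ≃L[ℝ] E :=
{ LinearEquiv.smulOfNeZero ℝ E c hc with
  continuous_toFun := continuous_const_smul c
  continuous_invFun := by
    show Continuous fun x => (LinearEquiv.smulOfNeZero ℝ E c hc).symm x
    have : (fun x => (LinearEquiv.smulOfNeZero ℝ E c hc).symm x) = fun x : E => c⁻¹ • x := by
      ext x; rfl
    rw [this]; exact continuous_const_smul c⁻¹ }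

lemma fderiv_homog (g : E → F) (c b : ℝ) (hc : c ≠ 0) (hb : b ≠ 0)
    (hg : ∀ z, g (c • z) = b • g z) (x : E) :
    fderiv ℝ g (c • x) = (b * c⁻¹) • fderiv ℝ g x := by
  set e : E ≃L[ℝ] E := smulCLE c hc with he
  have hcomp : g ∘ e = fun z => b • g z := funext hg
  have h1 := e.comp_right_fderiv (f := g) (x := x)
  rw [show e x = c • x from rfl] at h1
  have h2 : fderiv ℝ (fun z => b • g z) x = b • fderiv ℝ g x := by
    by_cases hd : DifferentiableAt ℝ g x
    · exact fderiv_fun_const_smul hd b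
    · have hd2 : ¬ DifferentiableAt ℝ (fun z => b • g z) x := by
        intro h
        exact hd (by simpa [Pi.smul_def, smul_smul, inv_mul_cancel₀ hb] using h.const_smul b⁻¹)
      rw [fderiv_zero_of_not_differentiableAt hd, fderiv_zero_of_not_differentiableAt hd2,
        smul_zero]
  have hkey : (fderiv ℝ g (c • x)).comp ((e : E →L[ℝ] E)) = b • fderiv ℝ g x := by
    rw [← h1, hcomp, h2]
  ext w
  have := congrArg (fun L : E →L[ℝ] F => L w) hkey
  simp only [ContinuousLinearMap.comp_apply, ContinuousLinearMap.smul_apply] at this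
  have hs : (e : E →L[ℝ] E) w = c • w := rfl
  rw [hs, map_smul] at this
  rw [ContinuousLinearMap.smul_apply]
  rw [mul_smul]
  rw [smul_comm, ← this, smul_smul, inv_mul_cancel₀ hc, one_smul]

lemma iter_homog (f : E → F) (c b : ℝ) (hc : c ≠ 0) (hb : b ≠ 0)
    (hf : ∀ x, f (c • x) = b • f x) :
    ∀ i x, iteratedFDeriv ℝ i f (c • x) = (b * (c⁻¹) ^ i) • iteratedFDeriv ℝ i f x := by
  intro i
  induction i with
  | zero =>
    intro x; ext m
    simp [iteratedFDeriv_zero_apply, hf]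
  | succ n ih =>
    intro x
    have hbn : b * (c⁻¹) ^ n ≠ 0 := mul_ne_zero hb (pow_ne_zero _ (inv_ne_zero hc))
    have key := fderiv_homog (iteratedFDeriv ℝ n f) c (b * (c⁻¹) ^ n) hc hbn ih x
    ext m
    rw [ContinuousMultilinearMap.smul_apply, iteratedFDeriv_succ_apply_left,
      iteratedFDeriv_succ_apply_left, key, ContinuousLinearMap.smul_apply,
      ContinuousMultilinearMap.smul_apply]
    congr 1
    ring

lemma flat_of_homog (f : E → F) (c b : ℝ) (hc : c ≠ 0) (hb : b ≠ 0)
    (hf : ∀ x, f (c • x) = b • f x) (i : ℕ) (hi : b * (c⁻¹) ^ i ≠ 1) :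
    iteratedFDeriv ℝ i f 0 = 0 := by
  have h := iter_homog f c b hc hb hf i 0
  rw [smul_zero] at h
  have : (b * (c⁻¹) ^ i - 1) • iteratedFDeriv ℝ i f 0 = 0 := by
    rw [sub_smul, one_smul, ← h, sub_self]
  rcases smul_eq_zero.1 this with h' | h'
  · exact absurd (by linarith [sub_eq_zero.1 h']) hi
  · exact h'

end Homog

theorem stmt_1 (k N : ℕ) (hN : 1 ≤ N) :
    ∀ i ≤ k, iteratedFDeriv ℝ i (fun x : Fin N → ℝ =>
      if x = 0 then 0 else (x ⟨0, hN⟩) ^ (3 + k) / (∑ i, (x i) ^ 2)) 0 = 0 := by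
  intro i hi
  set f : (Fin N → ℝ) → ℝ := fun x =>
    if x = 0 then 0 else (x ⟨0, hN⟩) ^ (3 + k) / (∑ i, (x i) ^ 2) with hfdef
  have hf : ∀ x, f ((2:ℝ) • x) = ((2:ℝ) ^ (k + 1)) • f x := by
    intro x
    by_cases hx : x = 0
    · simp [hfdef, hx]
    · have h2x : (2:ℝ) • x ≠ 0 := smul_ne_zero two_ne_zero hx
      have hs : (∑ j, (x j) ^ 2) ≠ 0 := by
        intro h
        apply hx
        funext j
        have hnn : ∀ j ∈ Finset.univ, (0:ℝ) ≤ (x j) ^ 2 := fun j _ => sq_nonneg _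
        have := (Finset.sum_eq_zero_iff_of_nonneg hnn).1 h j (Finset.mem_univ j)
        exact pow_eq_zero_iff two_ne_zero |>.1 this
      simp only [hfdef, if_neg hx, if_neg h2x, Pi.smul_apply, smul_eq_mul]
      rw [mul_pow]
      have hsum : (∑ j, ((2:ℝ) * x j) ^ 2) = 4 * ∑ j, (x j) ^ 2 := by
        rw [Finset.mul_sum]; congr 1; funext j; ring
      rw [hsum]
      field_simp
      rw [show 3 + k = (k + 1) + 2 by ring, pow_add]
      ring
  have hb : ((2:ℝ) ^ (k + 1)) ≠ 0 := pow_ne_zero _ two_ne_zero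
  have h0 : iteratedFDeriv ℝ i f 0 = 0 := by
    apply flat_of_homog f 2 ((2:ℝ) ^ (k + 1)) two_ne_zero hb hf i
    have h1 : (2:ℝ) ^ (k + 1) * ((2:ℝ)⁻¹) ^ i = 2 ^ (k + 1 - i) := by
      rw [inv_pow, ← div_eq_mul_inv, pow_sub₀ (2:ℝ) two_ne_zero (by omega : i ≤ k + 1), div_eq_mul_inv]
    rw [h1]
    have : (1:ℝ) < 2 ^ (k + 1 - i) := one_lt_pow₀ one_lt_two (by omega)
    linarith
  exact h0
end

section
/- Let A be a commutative ring in which −1 is not a sum of squares. Then A has a real prime ideal, i.e., a prime ideal p such that whenever a₁² + ... + a_n² ∈ p, all aᵢ ∈ p. -/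
section aux
variable {A : Type*} [CommRing A]

/-- preorderings -/
def IsPreord (S : Set A) : Prop :=
  (∀ x ∈ S, ∀ y ∈ S, x + y ∈ S) ∧ (∀ x ∈ S, ∀ y ∈ S, x * y ∈ S) ∧
    (∀ x : A, x ^ 2 ∈ S) ∧ (-1 : A) ∉ S

lemma isSumSq_sq_mul (a : A) {y : A} (hy : IsSumSq y) : IsSumSq (a * a * y) := by
  induction hy with
  | zero => simpa using IsSumSq.zero
  | @sq_add b T pT ihT =>
    have : a * a * (b * b + T) = (a * b) * (a * b) + a * a * T := by ring
    rw [this]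
    exact IsSumSq.sq_add _ ihT

lemma isSumSq_mul {x y : A} (hx : IsSumSq x) (hy : IsSumSq y) : IsSumSq (x * y) := by
  induction hx with
  | zero => simpa using IsSumSq.zero
  | @sq_add a S pS ih =>
    have : (a * a + S) * y = a * a * y + S * y := by ring
    rw [this]
    exact IsSumSq.add (isSumSq_sq_mul a hy) ih

end aux

theorem stmt_7 {A : Type*} [CommRing A] (h : ¬ IsSumSq (-1 : A)) :
    ∃ p : Ideal A, p.IsPrime ∧
      ∀ (n : ℕ) (a : Fin n → A), (∑ i, (a i) ^ 2) ∈ p → ∀ i, a i ∈ p := by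
  -- base preordering: sums of squares
  have base : IsPreord {x : A | IsSumSq x} := by
    refine ⟨fun x hx y hy => hx.add hy, fun x hx y hy => isSumSq_mul hx hy, fun x => ?_, h⟩
    show IsSumSq (x ^ 2)
    have : x ^ 2 = x * x + 0 := by ring
    rw [this]; exact IsSumSq.sq_add _ IsSumSq.zero
  -- Zorn: a maximal preordering P
  obtain ⟨P, -, hPmax⟩ := zorn_subset_nonempty {S : Set A | IsPreord S}
    (fun c hc hchain hne => by
      refine ⟨⋃₀ c, ⟨?_, ?_, ?_, ?_⟩, fun s hs => Set.subset_sUnion_of_mem hs⟩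
      · rintro x ⟨s, hs, hxs⟩ y ⟨t, ht, hyt⟩
        rcases hchain.total hs ht with hst | hts
        · exact ⟨t, ht, (hc ht).1 x (hst hxs) y hyt⟩
        · exact ⟨s, hs, (hc hs).1 x hxs y (hts hyt)⟩
      · rintro x ⟨s, hs, hxs⟩ y ⟨t, ht, hyt⟩
        rcases hchain.total hs ht with hst | hts
        · exact ⟨t, ht, (hc ht).2.1 x (hst hxs) y hyt⟩
        · exact ⟨s, hs, (hc hs).2.1 x hxs y (hts hyt)⟩
      · intro x
        obtain ⟨s, hs⟩ := hne
        exact ⟨s, hs, (hc hs).2.2.1 x⟩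
      · rintro ⟨s, hs, hneg⟩
        exact (hc hs).2.2.2 hneg)
    {x : A | IsSumSq x} base
  obtain ⟨hPadd, hPmul, hPsq, hPneg⟩ := hPmax.prop
  have h0 : (0 : A) ∈ P := by simpa using hPsq 0
  have h1 : (1 : A) ∈ P := by simpa using hPsq 1
  -- key: for every a, a ∈ P or -1 ∈ P + aP
  have key : ∀ a : A, a ∈ P ∨ ∃ p ∈ P, ∃ q ∈ P, (-1 : A) = p + a * q := by
    intro a
    by_cases hm : ∃ p ∈ P, ∃ q ∈ P, (-1 : A) = p + a * q
    · exact Or.inr hm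
    left
    push_neg at hm
    set Q : Set A := {x | ∃ p ∈ P, ∃ q ∈ P, x = p + a * q} with hQ
    have hPQ : P ⊆ Q := fun x hx => ⟨x, hx, 0, h0, by ring⟩
    have hQpre : IsPreord Q := by
      refine ⟨?_, ?_, ?_, ?_⟩
      · rintro x ⟨p, hp, q, hq, rfl⟩ y ⟨p', hp', q', hq', rfl⟩
        exact ⟨p + p', hPadd _ hp _ hp', q + q', hPadd _ hq _ hq', by ring⟩
      · rintro x ⟨p, hp, q, hq, rfl⟩ y ⟨p', hp', q', hq', rfl⟩
        refine ⟨p * p' + a ^ 2 * (q * q'), ?_, p * q' + q * p', ?_, by ring⟩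
        · exact hPadd _ (hPmul _ hp _ hp') _ (hPmul _ (hPsq a) _ (hPmul _ hq _ hq'))
        · exact hPadd _ (hPmul _ hp _ hq') _ (hPmul _ hq _ hp')
      · exact fun x => hPQ (hPsq x)
      · rintro ⟨p, hp, q, hq, heq⟩
        exact hm p hp q hq heq
    have hQP : P = Q := (hPmax.eq_of_superset hQpre hPQ).symm
    have : a ∈ Q := ⟨0, h0, 1, h1, by ring⟩
    rwa [← hQP] at this
  -- P ∪ -P = A
  have total : ∀ a : A, a ∈ P ∨ -a ∈ P := by
    intro a
    rcases key a with ha | ⟨p1, hp1, q1, hq1, he1⟩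
    · exact Or.inl ha
    rcases key (-a) with ha | ⟨p2, hp2, q2, hq2, he2⟩
    · exact Or.inr ha
    exfalso
    have hkey : (-1 : A) = p1 + p2 + p1 * p2 + q1 * q2 * a ^ 2 := by
      linear_combination (1 + p2) * he1 - (a * q1) * he2
    apply hPneg
    rw [hkey]
    exact hPadd _ (hPadd _ (hPadd _ hp1 _ hp2) _ (hPmul _ hp1 _ hp2)) _
      (hPmul _ (hPmul _ hq1 _ hq2) _ (hPsq a))
  -- the support ideal p = P ∩ -P
  have mem_smul : ∀ (r x : A), x ∈ P → -x ∈ P → r * x ∈ P ∧ -(r * x) ∈ P := by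
    intro r x hx hnx
    rcases total r with hr | hr
    · refine ⟨hPmul _ hr _ hx, ?_⟩
      have : -(r * x) = r * (-x) := by ring
      rw [this]; exact hPmul _ hr _ hnx
    · constructor
      · have : r * x = (-r) * (-x) := by ring
        rw [this]; exact hPmul _ hr _ hnx
      · have : -(r * x) = (-r) * x := by ring
        rw [this]; exact hPmul _ hr _ hx
  let p : Ideal A :=
  { carrier := {x | x ∈ P ∧ -x ∈ P}
    zero_mem' := ⟨h0, by simpa using h0⟩
    add_mem' := fun {x y} hx hy => ⟨hPadd _ hx.1 _ hy.1, by
      show -(x + y) ∈ P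
      have : -(x + y) = -x + -y := by ring
      rw [this]; exact hPadd _ hx.2 _ hy.2⟩
    smul_mem' := fun r x hx => mem_smul r x hx.1 hx.2 }
  have memp : ∀ x : A, x ∈ p ↔ x ∈ P ∧ -x ∈ P := fun x => Iff.rfl
  have hpone : (1 : A) ∉ p := fun hc => hPneg hc.2
  have hprime : p.IsPrime := by
    refine ⟨fun h1 => hpone (h1 ▸ Submodule.mem_top), ?_⟩
    intro x y hxy
    by_contra hcon
    push_neg at hcon
    obtain ⟨hx, hy⟩ := hcon
    obtain ⟨x0, hx0P, hx0y⟩ : ∃ x0 : A, -x0 ∉ P ∧ x0 * y ∈ p := by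
      by_cases hnx : -x ∈ P
      · have hxP : x ∉ P := fun hc => hx ⟨hc, hnx⟩
        exact ⟨-x, by simpa using hxP, by simpa [neg_mul] using p.neg_mem hxy⟩
      · exact ⟨x, hnx, hxy⟩
    obtain ⟨y0, hy0P, hxy0⟩ : ∃ y0 : A, -y0 ∉ P ∧ x0 * y0 ∈ p := by
      by_cases hny : -y ∈ P
      · have hyP : y ∉ P := fun hc => hy ⟨hc, hny⟩
        exact ⟨-y, by simpa using hyP, by simpa [mul_neg] using p.neg_mem hx0y⟩
      · exact ⟨y, hny, hx0y⟩
    rcases key (-x0) with hc | ⟨p1, hp1, q1, hq1, he1⟩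
    · exact hx0P hc
    rcases key (-y0) with hc | ⟨p2, hp2, q2, hq2, he2⟩
    · exact hy0P hc
    apply hPneg
    have hmem : -(x0 * y0) * (q1 * q2) ∈ P := hPmul _ hxy0.2 _ (hPmul _ hq1 _ hq2)
    have hkey : (-1 : A) = -(x0 * y0) * (q1 * q2) + (p1 + p2 + p1 * p2) := by
      linear_combination (1 + p2) * he1 + (x0 * q1) * he2
    rw [hkey]
    exact hPadd _ hmem _ (hPadd _ (hPadd _ hp1 _ hp2) _ (hPmul _ hp1 _ hp2))
  have sq_mem : ∀ x : A, x ^ 2 ∈ p → x ∈ p := by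
    intro x hx
    have : x * x ∈ p := by rwa [← sq]
    rcases hprime.mem_or_mem this with hm | hm <;> exact hm
  refine ⟨p, hprime, ?_⟩
  intro n a hsum i
  apply sq_mem
  have hsqs : ∀ (s : Finset (Fin n)), (∑ j ∈ s, a j ^ 2) ∈ P := by
    intro s
    classical
    induction s using Finset.induction with
    | empty => simpa using h0
    | @insert j s hj ih => rw [Finset.sum_insert hj]; exact hPadd _ (hPsq _) _ ih
  refine ⟨hPsq (a i), ?_⟩
  have heq : -(a i ^ 2) = -(∑ j, a j ^ 2) + ∑ j ∈ Finset.univ.erase i, a j ^ 2 := by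
    rw [← Finset.add_sum_erase _ _ (Finset.mem_univ i)]; ring
  rw [heq]
  exact hPadd _ hsum.2 _ (hsqs _)
end
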